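/- The number of 2×m matrices A=[a_ij] with entries in [0,n-1] satisfying: (i) the first row is strictly increasing, (ii) the second row is weakly increasing, (iii) repeated entries in the second row are all 0, and (iv) a_{1j} ≥ a_{2j} for each column j, together with the single degenerate matrix, equals the central binomial coefficient C(2n,n). -/

import Mathlib

open Finset

/-- `l` encodes a (non-degenerate) indexing matrix on `n` points: the columns,
listed left to right, as pairs `(top entry, bottom entry)`.  Entries lie in
`[0, n-1]`, the first row is strictly increasing, the second row is weakly
increasing, repeated second-row entries are `0`, and each top entry is at
least the corresponding bottom entry. -/
def IsIndexingMatrix (n : ℕ) (l : List (ℕ × ℕ)) : Prop :=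
  1 ≤ l.length ∧ l.length ≤ n ∧
  (∀ p ∈ l, p.1 < n ∧ p.2 ≤ p.1) ∧
  l.Pairwise (fun p q => p.1 < q.1 ∧ p.2 ≤ q.2 ∧ (p.2 = q.2 → p.2 = 0))

/-- A positive indexing matrix: all entries are positive. -/
def IsPositiveIndexingMatrix (n : ℕ) (l : List (ℕ × ℕ)) : Prop :=
  IsIndexingMatrix n l ∧ ∀ p ∈ l, 0 < p.1 ∧ 0 < p.2

/-- `θ_k^{(n)}`: the number of positive indexing matrices whose `(1,1)` entry
equals `k`. -/
noncomputable def theta (n k : ℕ) : ℕ :=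
  Nat.card {l : List (ℕ × ℕ) //
    IsPositiveIndexingMatrix n l ∧ l.head?.map Prod.fst = some k}

/-- The blob-rank of an indexing matrix: the number of its columns containing
a `0`. -/
def blobRank (l : List (ℕ × ℕ)) : ℕ := l.countP (fun p => p.1 == 0 || p.2 == 0)

/-- `Ω_r^{(n)}`: the number of indexing matrices on `n` points of blob-rank `r`,
the degenerate indexing matrix being counted in `Ω_0^{(n)}`. -/
noncomputable def Omega (n r : ℕ) : ℕ :=
  Nat.card {l : List (ℕ × ℕ) // IsIndexingMatrix n l ∧ blobRank l = r} +
    (if r = 0 then 1 else 0)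

/-- `χ_k^{(n)} = Σ_{i₁+⋯+i_k = n-k} C_{i₁} ⋯ C_{i_k}` (Catalan numbers). -/
def chi (n k : ℕ) : ℕ :=
  ∑ t ∈ Finset.Nat.antidiagonalTuple k (n - k), ∏ j, catalan (t j)

/-- A Temperley–Lieb diagram on `n` points: a non-crossing perfect matching of
`2n` boundary points numbered clockwise, given by a fixed-point free
involution. -/
structure TLDiagram (n : ℕ) where
  f : Fin (2 * n) → Fin (2 * n)
  involutive : ∀ x, f (f x) = x
  noFixedPoint : ∀ x, f x ≠ x
  noncrossing : ∀ a b : Fin (2 * n), a < b → b < f a → f a < f b → False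

/-- `a` is the left (smaller) endpoint of an arc of `D`. -/
def TLDiagram.IsArc {n : ℕ} (D : TLDiagram n) (a : Fin (2 * n)) : Prop :=
  a < D.f a

/-- The arc with left endpoint `a` is exposed to the left side of the diagram,
i.e. it is not nested inside any other arc. -/
def TLDiagram.IsExposed {n : ℕ} (D : TLDiagram n) (a : Fin (2 * n)) : Prop :=
  a < D.f a ∧ ∀ c, ¬ (c < a ∧ D.f a < D.f c)

/-- The number of arcs of `D` exposed to the left side. -/
noncomputable def exposedCount {n : ℕ} (D : TLDiagram n) : ℕ :=
  Nat.card {a : Fin (2 * n) // D.IsExposed a}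

/-- A `d`-abacus blob diagram on `n` points: a TL-diagram together with blobs
on some arcs exposed to the left, one bead count in `ℤ/dℤ` on every arc, and
an extra bead count on every blobbed arc (its second component). -/
structure AbacusBlobDiagram (d n : ℕ) where
  base : TLDiagram n
  blob : Fin (2 * n) → Bool
  blob_exposed : ∀ a, blob a = true → base.IsExposed a
  beads₁ : Fin (2 * n) → ZMod d
  beads₂ : Fin (2 * n) → ZMod d
  beads₁_arc : ∀ a, ¬ base.IsArc a → beads₁ a = 0
  beads₂_blob : ∀ a, blob a = false → beads₂ a = 0

/-- A `d`-abacus hook diagram on `n` points: a blobbed TL-diagram in which all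
blobbed arcs are merged into the single hook component through `0, 0'`, with a
bead count in `ℤ/dℤ` on every unblobbed arc and one on the hook component. -/
structure AbacusHookDiagram (d n : ℕ) where
  base : TLDiagram n
  blob : Fin (2 * n) → Bool
  blob_exposed : ∀ a, blob a = true → base.IsExposed a
  beads : Fin (2 * n) → ZMod d
  beads_arc : ∀ a, ¬ base.IsArc a ∨ blob a = true → beads a = 0
  hookBeads : ZMod d


def ixF (k s : ℕ) : ℕ := ∑ i ∈ Finset.Icc (k - s) (k + s), (2*k).choose i

lemma ixF_eq (k s a b m : ℕ) (h1 : k - s = a) (h2 : k + s = b) (h3 : 2*k = m) :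
    ixF k s = ∑ i ∈ Finset.Icc a b, m.choose i := by
  subst h1; subst h2; subst h3; rfl

lemma ix_choose_two (m j : ℕ) :
    (m+2).choose (j+2) = m.choose j + 2 * m.choose (j+1) + m.choose (j+2) := by
  simp [Nat.choose_succ_succ]; ring

lemma ix_choose_two' (m i : ℕ) (hi : 2 ≤ i) :
    (m+2).choose i = m.choose (i-2) + 2 * m.choose (i-1) + m.choose i := by
  obtain ⟨j, rfl⟩ : ∃ j, i = j + 2 := ⟨i - 2, by omega⟩
  have h1 : j + 2 - 2 = j := by omega
  have h2 : j + 2 - 1 = j + 1 := by omega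
  rw [h1, h2, ix_choose_two]

lemma ix_Icc_zero_range (n : ℕ) : Finset.Icc 0 n = Finset.range (n+1) := by
  ext i; simp [Nat.lt_succ_iff]

lemma ixF_zero (k : ℕ) : ixF k 0 = (2*k).choose k := by simp [ixF]

lemma ixF_full {k s : ℕ} (h : k ≤ s) : ixF k s = 4^k := by
  have h0 : k - s = 0 := by omega
  rw [ixF, h0, ix_Icc_zero_range]
  have hsub : Finset.range (2*k+1) ⊆ Finset.range (k+s+1) := by
    apply Finset.range_subset_range.2; omega
  rw [← Finset.sum_subset hsub (fun x _ hx => Nat.choose_eq_zero_of_lt (by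
    simp [Finset.mem_range] at hx ⊢; omega))]
  rw [Nat.sum_range_choose]
  rw [show (4:ℕ)^k = (2^2)^k by norm_num, ← pow_mul]

lemma ix_shift (f : ℕ → ℕ) (a b d : ℕ) (hd : d ≤ a) :
    ∑ i ∈ Finset.Icc a (b+d), f (i - d) = ∑ i ∈ Finset.Icc (a-d) b, f i := by
  apply Finset.sum_bij' (fun i _ => i - d) (fun j _ => j + d)
  · intro i hi; simp only [Finset.mem_Icc] at *; omega
  · intro j hj; simp only [Finset.mem_Icc] at *; omega
  · intro i hi; simp only [Finset.mem_Icc] at *; omega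
  · intro j hj; simp only [Finset.mem_Icc] at *; omega
  · intro i hi; rfl

lemma ix_sum_Icc3 (a : ℕ) (f : ℕ → ℕ) :
    ∑ i ∈ Finset.Icc a (a+2), f i = f a + f (a+1) + f (a+2) := by
  rw [show a + 2 = (a+1)+1 from rfl, Finset.sum_Icc_succ_top (by omega),
    show a + 1 = a+1 from rfl, Finset.sum_Icc_succ_top (by omega)]
  simp

lemma ix_edge (m : ℕ) : ∑ i ∈ Finset.Icc 1 (2*m+1), (2*m+2).choose i + 2 = 4^(m+1) := by
  have h4 : (4:ℕ)^(m+1) = 2^(2*m+2) := by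
    rw [show (4:ℕ) = 2^2 by norm_num, ← pow_mul]; ring_nf
  rw [h4, ← Nat.sum_range_choose (2*m+2)]
  rw [show 2*m+2+1 = (2*m+2)+1 from rfl, ← ix_Icc_zero_range]
  have h0 : (0:ℕ) ∉ Finset.Icc 1 (2*m+2) := by simp
  rw [show Finset.Icc 0 (2*m+2) = insert 0 (Finset.Icc 1 (2*m+2)) by
    ext i; simp [Finset.mem_Icc]; omega]
  rw [Finset.sum_insert h0]
  have hpeel : ∑ i ∈ Finset.Icc 1 (2*m+2), (2*m+2).choose i
      = ∑ i ∈ Finset.Icc 1 (2*m+1), (2*m+2).choose i + (2*m+2).choose (2*m+2) := by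
    rw [show (2*m+2) = (2*m+1)+1 from rfl]
    exact Finset.sum_Icc_succ_top (by omega) _
  rw [hpeel, Nat.choose_self, Nat.choose_zero_right]
  omega

lemma ixF_succ_zero (k : ℕ) : ixF (k+1) 0 = ixF k 1 + ixF k 0 := by
  cases k with
  | zero => simp [ixF]; rw [ix_Icc_zero_range]; decide
  | succ k =>
    rw [ixF_zero, ixF_zero]
    rw [ixF_eq (k+1) 1 k (k+2) (2*k+2) (by omega) (by omega) (by omega)]
    rw [ix_sum_Icc3 k (fun i => (2*k+2).choose i)]
    rw [show 2*(k+1+1) = (2*k+2)+2 by ring, show k+1+1 = k+2 from rfl,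
      show (k:ℕ)+2 = k+2 from rfl]
    rw [show ((2*k+2)+2).choose (k+2) = (2*k+2).choose k + 2*(2*k+2).choose (k+1) + (2*k+2).choose (k+2) from ix_choose_two _ _,
      show 2*(k+1) = 2*k+2 by ring]
    omega

lemma ixF_succ_succ (k s : ℕ) :
    ixF (k+1) (s+1) = ixF k (s+2) + 2 * ixF k (s+1) + ixF k s := by
  rcases le_or_gt k s with h | h
  · rw [ixF_full (by omega), ixF_full (by omega), ixF_full (by omega),
      ixF_full (by omega)]
    ring
  rcases eq_or_lt_of_le (Nat.succ_le_of_lt h) with h1 | h2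
  · -- k = s + 1
      subst h1
      have e1 := ix_edge (s+1)
      have e2 := ix_edge s
      rw [ixF_eq (s+1+1) (s+1) 1 (2*(s+1)+1) (2*(s+1)+2) (by omega) (by omega)
          (by ring),
        ixF_eq (s+1) s 1 (2*s+1) (2*s+2) (by omega) (by omega) (by ring),
        ixF_full (by omega), ixF_full (by omega)]
      have h43 : (4:ℕ)^(s+1+1) = 4 * 4^(s+1) := by ring
      omega
  · -- s + 2 ≤ k
    have hk : s + 2 ≤ k := by omega
    rw [ixF_eq (k+1) (s+1) (k-s) ((k+s)+2) (2*k+2) (by omega) (by omega) (by ring)]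
    have hstep : ∑ i ∈ Finset.Icc (k-s) ((k+s)+2), (2*k+2).choose i
        = ∑ i ∈ Finset.Icc (k-s) ((k+s)+2),
            ((2*k).choose (i-2) + 2 * (2*k).choose (i-1) + (2*k).choose i) := by
      apply Finset.sum_congr rfl
      intro i hi
      simp only [Finset.mem_Icc] at hi
      exact ix_choose_two' (2*k) i (by omega)
    rw [hstep, Finset.sum_add_distrib, Finset.sum_add_distrib, ← Finset.mul_sum]
    have hs2 : ∑ i ∈ Finset.Icc (k-s) ((k+s)+2), (2*k).choose (i-2)
        = ∑ i ∈ Finset.Icc (k-s-2) (k+s), (2*k).choose i :=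
      ix_shift _ (k-s) (k+s) 2 (by omega)
    have hs1 : ∑ i ∈ Finset.Icc (k-s) ((k+s)+2), (2*k).choose (i-1)
        = ∑ i ∈ Finset.Icc (k-s-1) (k+s+1), (2*k).choose i := by
      have := ix_shift (fun i => (2*k).choose i) (k-s) (k+s+1) 1 (by omega)
      rw [show (k+s+1)+1 = (k+s)+2 by omega] at this
      exact this
    rw [hs2, hs1]
    have hF1 : ixF k (s+1) = ∑ i ∈ Finset.Icc (k-s-1) (k+s+1), (2*k).choose i :=
      ixF_eq _ _ _ _ _ (by omega) (by omega) rfl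
    have hF2 : ixF k (s+2) = ∑ i ∈ Finset.Icc (k-s-2) (k+s), (2*k).choose i
        + (2*k).choose (k+s+1) + (2*k).choose (k+s+2) := by
      rw [ixF_eq k (s+2) (k-s-2) (((k+s)+1)+1) (2*k) (by omega) (by omega) rfl,
        Finset.sum_Icc_succ_top (by omega), Finset.sum_Icc_succ_top (by omega)]
    have hF3 : ∑ i ∈ Finset.Icc (k-s) ((k+s)+2), (2*k).choose i
        = ixF k s + (2*k).choose (k+s+1) + (2*k).choose (k+s+2) := by
      rw [show (k+s)+2 = ((k+s)+1)+1 from rfl,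
        Finset.sum_Icc_succ_top (by omega), Finset.sum_Icc_succ_top (by omega)]
      rw [ixF_eq k s (k-s) (k+s) (2*k) rfl rfl rfl]
    rw [hF3, hF2, ← hF1]
    ring

/-! ### Auxiliary development for `stmt0` -/

def ixRel : ℕ → List ℕ → List ℕ → Prop
  | _, [], _ => True
  | 0, _ :: _, [] => False
  | 0, c :: cs, a :: as => c ≤ a ∧ ixRel 0 cs as
  | s+1, _ :: cs, as => ixRel s cs as

@[simp] lemma ixRel_nil (s : ℕ) (as : List ℕ) : ixRel s [] as := by
  cases s <;> trivial

lemma ixRel_cons_top {n : ℕ} (cs : List ℕ) (hcs : ∀ c ∈ cs, c ≤ n) :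
    ∀ (s : ℕ) (as : List ℕ), ixRel s cs (n :: as) ↔ ixRel (s+1) cs as := by
  induction cs with
  | nil => intro s as; simp
  | cons c cs' ih =>
    intro s as
    cases s with
    | zero =>
      simp only [ixRel]
      have hc : c ≤ n := hcs c (by simp)
      have := ih (fun x hx => hcs x (by simp [hx])) 0 as
      tauto
    | succ s' =>
      simp only [ixRel]
      exact ih (fun x hx => hcs x (by simp [hx])) s' as

lemma ixRel_not_top {n : ℕ} (cs as : List ℕ) (has : ∀ a ∈ as, a < n+1) :
    ¬ ixRel 0 ((n+1) :: cs) as := by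
  cases as with
  | nil => simp [ixRel]
  | cons a as' =>
    simp only [ixRel]
    intro h
    exact absurd h.1 (by have := has a (by simp); omega)

lemma ixRel_len {s : ℕ} {cs as : List ℕ} (h : ixRel s cs as) :
    cs.length ≤ as.length + s := by
  induction cs generalizing s as with
  | nil => simp
  | cons c cs' ih =>
    cases s with
    | zero =>
      cases as with
      | nil => exact absurd h (by simp [ixRel])
      | cons a as' =>
        simp only [ixRel] at h
        have := ih h.2
        simp; omega
    | succ s' =>
      simp only [ixRel] at h
      have := ih h
      simp; omega

def ixPred (n s : ℕ) (p : List ℕ × List ℕ) : Prop :=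
  p.1.Pairwise (· > ·) ∧ (∀ a ∈ p.1, a < n) ∧ p.2.Pairwise (· > ·) ∧
    (∀ c ∈ p.2, 1 ≤ c ∧ c ≤ n) ∧ ixRel s p.2 p.1

def ixGMF : ℕ → ℕ → Finset (List ℕ × List ℕ)
  | 0, _ => {([], [])}
  | n+1, 0 => ixGMF n 0 ∪ (ixGMF n 1).image (fun p => (n :: p.1, p.2))
  | n+1, s+1 =>
      ((ixGMF n (s+1) ∪ (ixGMF n (s+2)).image (fun p => (n :: p.1, p.2)))
        ∪ (ixGMF n s).image (fun p => (p.1, (n+1) :: p.2)))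
        ∪ (ixGMF n (s+1)).image (fun p => (n :: p.1, (n+1) :: p.2))

lemma ix_pairwise_cons {n : ℕ} {as : List ℕ} :
    (n :: as).Pairwise (fun a b => a > b) ↔ (∀ a ∈ as, a < n) ∧ as.Pairwise (· > ·) := by
  rw [List.pairwise_cons]

lemma ix_head_or {n : ℕ} {as : List ℕ} (hp : as.Pairwise (· > ·))
    (hb : ∀ a ∈ as, a < n + 1) :
    (∃ as', as = n :: as') ∨ ∀ a ∈ as, a < n := by
  cases as with
  | nil => right; simp
  | cons a as' =>
    by_cases ha : a = n
    · left; exact ⟨as', by rw [ha]⟩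
    · right
      have han : a < n := by have := hb a (by simp); omega
      intro x hx
      rcases List.mem_cons.1 hx with rfl | hx'
      · exact han
      · have : a > x := (List.pairwise_cons.1 hp).1 x hx'
        omega

lemma ix_headc_or {n : ℕ} {cs : List ℕ} (hp : cs.Pairwise (· > ·))
    (hb : ∀ c ∈ cs, c ≤ n + 1) :
    (∃ cs', cs = (n+1) :: cs') ∨ ∀ c ∈ cs, c ≤ n := by
  cases cs with
  | nil => right; simp
  | cons c cs' =>
    by_cases hc : c = n + 1
    · left; exact ⟨cs', by rw [hc]⟩
    · right
      have hcn : c ≤ n := by have := hb c (by simp); omega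
      intro x hx
      rcases List.mem_cons.1 hx with rfl | hx'
      · exact hcn
      · have : c > x := (List.pairwise_cons.1 hp).1 x hx'
        omega
lemma ixGMF_mem (n : ℕ) : ∀ (s : ℕ) (p : List ℕ × List ℕ),
    p ∈ ixGMF n s ↔ ixPred n s p := by
  induction n with
  | zero =>
    intro s p
    simp only [ixGMF, Finset.mem_singleton]
    constructor
    · rintro rfl
      exact ⟨by simp, by simp, by simp, by simp, by simp⟩
    · rintro ⟨h1, h2, h3, h4, h5⟩
      obtain ⟨as, cs⟩ := p
      have ha : as = [] := List.eq_nil_iff_forall_not_mem.2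
        (fun a ha => by have := h2 a ha; omega)
      have hc : cs = [] := List.eq_nil_iff_forall_not_mem.2
        (fun c hc => by have := h4 c hc; omega)
      simp [ha, hc]
  | succ n ih =>
    intro s p
    obtain ⟨as, cs⟩ := p
    cases s with
    | zero =>
      simp only [ixGMF, Finset.mem_union, Finset.mem_image]
      constructor
      · rintro (h | ⟨q, hq, heq⟩)
        · obtain ⟨h1, h2, h3, h4, h5⟩ := (ih 0 _).1 h
          exact ⟨h1, fun a ha => by have := h2 a ha; omega, h3,
            fun c hc => by have := h4 c hc; omega, h5⟩
        · obtain ⟨h1, h2, h3, h4, h5⟩ := (ih 1 _).1 hq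
          obtain ⟨heq1, heq2⟩ := Prod.mk.injEq _ _ _ _ ▸ heq
          subst heq1; subst heq2
          refine ⟨ix_pairwise_cons.2 ⟨h2, h1⟩, ?_, h3,
            fun c hc => by have := h4 c hc; omega, ?_⟩
          · intro a ha
            rcases List.mem_cons.1 ha with rfl | ha'
            · omega
            · have := h2 a ha'; omega
          · exact (ixRel_cons_top q.2 (fun c hc => (h4 c hc).2) 0 q.1).2 h5
      · rintro ⟨h1, h2, h3, h4, h5⟩
        have hcs : ∀ c ∈ cs, c ≤ n := by
          rcases ix_headc_or h3 (fun c hc => (h4 c hc).2) with ⟨cs', rfl⟩ | h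
          · exact absurd h5 (ixRel_not_top cs' as h2)
          · exact h
        rcases ix_head_or h1 h2 with ⟨as', rfl⟩ | h
        · right
          refine ⟨(as', cs), (ih 1 _).2 ⟨(ix_pairwise_cons.1 h1).2,
            (ix_pairwise_cons.1 h1).1, h3, fun c hc => ⟨(h4 c hc).1, hcs c hc⟩,
            (ixRel_cons_top cs hcs 0 as').1 h5⟩, rfl⟩
        · left
          exact (ih 0 _).2 ⟨h1, h, h3, fun c hc => ⟨(h4 c hc).1, hcs c hc⟩, h5⟩
    | succ s' =>
      simp only [ixGMF, Finset.mem_union, Finset.mem_image]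
      constructor
      · rintro (((h | ⟨q, hq, heq⟩) | ⟨q, hq, heq⟩) | ⟨q, hq, heq⟩)
        · obtain ⟨h1, h2, h3, h4, h5⟩ := (ih (s'+1) _).1 h
          exact ⟨h1, fun a ha => by have := h2 a ha; omega, h3,
            fun c hc => by have := h4 c hc; omega, h5⟩
        · -- add n to as
          obtain ⟨h1, h2, h3, h4, h5⟩ := (ih (s'+2) _).1 hq
          obtain ⟨heq1, heq2⟩ := Prod.mk.injEq _ _ _ _ ▸ heq
          subst heq1; subst heq2
          refine ⟨ix_pairwise_cons.2 ⟨h2, h1⟩, ?_, h3,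
            fun c hc => by have := h4 c hc; omega, ?_⟩
          · intro a ha
            rcases List.mem_cons.1 ha with rfl | ha'
            · omega
            · have := h2 a ha'; omega
          · exact (ixRel_cons_top q.2 (fun c hc => (h4 c hc).2) (s'+1) q.1).2 h5
        · -- add n+1 to cs
          obtain ⟨h1, h2, h3, h4, h5⟩ := (ih s' _).1 hq
          obtain ⟨heq1, heq2⟩ := Prod.mk.injEq _ _ _ _ ▸ heq
          subst heq1; subst heq2
          refine ⟨h1, fun a ha => by have := h2 a ha; omega, ?_, ?_, ?_⟩
          · refine List.pairwise_cons.2 ⟨fun c hc => ?_, h3⟩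
            have := h4 c hc; omega
          · intro c hc
            rcases List.mem_cons.1 hc with rfl | hc'
            · omega
            · have := h4 c hc'; omega
          · simp only [ixRel]; exact h5
        · -- add both
          obtain ⟨h1, h2, h3, h4, h5⟩ := (ih (s'+1) _).1 hq
          obtain ⟨heq1, heq2⟩ := Prod.mk.injEq _ _ _ _ ▸ heq
          subst heq1; subst heq2
          refine ⟨ix_pairwise_cons.2 ⟨h2, h1⟩, ?_, ?_, ?_, ?_⟩
          · intro a ha
            rcases List.mem_cons.1 ha with rfl | ha'
            · omega
            · have := h2 a ha'; omega
          · refine List.pairwise_cons.2 ⟨fun c hc => ?_, h3⟩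
            have := h4 c hc; omega
          · intro c hc
            rcases List.mem_cons.1 hc with rfl | hc'
            · omega
            · have := h4 c hc'; omega
          · show ixRel s' q.2 (n :: q.1)
            exact (ixRel_cons_top q.2 (fun c hc => (h4 c hc).2) s' q.1).2 h5
      · rintro ⟨h1, h2, h3, h4, h5⟩
        rcases ix_headc_or h3 (fun c hc => (h4 c hc).2) with ⟨cs', rfl⟩ | hcs
        · -- cs = (n+1) :: cs'
          have hcs' : ∀ c ∈ cs', 1 ≤ c ∧ c ≤ n := by
            intro c hc
            have hgt : n + 1 > c := (List.pairwise_cons.1 h3).1 c hc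
            have := h4 c (by simp [hc])
            omega
          have h5' : ixRel s' cs' as := h5
          rcases ix_head_or h1 h2 with ⟨as', rfl⟩ | h
          · right
            refine ⟨(as', cs'), (ih (s'+1) _).2 ⟨(ix_pairwise_cons.1 h1).2,
              (ix_pairwise_cons.1 h1).1, (List.pairwise_cons.1 h3).2, hcs', ?_⟩, rfl⟩
            exact (ixRel_cons_top cs' (fun c hc => (hcs' c hc).2) s' as').1 h5'
          · left; right
            exact ⟨(as, cs'), (ih s' _).2 ⟨h1, h, (List.pairwise_cons.1 h3).2,
              hcs', h5'⟩, rfl⟩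
        · rcases ix_head_or h1 h2 with ⟨as', rfl⟩ | h
          · left; left; right
            refine ⟨(as', cs), (ih (s'+2) _).2 ⟨(ix_pairwise_cons.1 h1).2,
              (ix_pairwise_cons.1 h1).1, h3, fun c hc => ⟨(h4 c hc).1, hcs c hc⟩, ?_⟩, rfl⟩
            exact (ixRel_cons_top cs hcs (s'+1) as').1 h5
          · left; left; left
            exact (ih (s'+1) _).2 ⟨h1, h, h3, fun c hc => ⟨(h4 c hc).1, hcs c hc⟩, h5⟩

lemma ixGMF_boundA {n t : ℕ} {p : List ℕ × List ℕ} (h : p ∈ ixGMF n t) :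
    ∀ a ∈ p.1, a < n := ((ixGMF_mem n t p).1 h).2.1

lemma ixGMF_boundC {n t : ℕ} {p : List ℕ × List ℕ} (h : p ∈ ixGMF n t) :
    ∀ c ∈ p.2, c ≤ n := fun c hc => (((ixGMF_mem n t p).1 h).2.2.2.1 c hc).2

lemma ix_injA (n : ℕ) : Function.Injective (fun p : List ℕ × List ℕ => (n :: p.1, p.2)) := by
  rintro ⟨a, b⟩ ⟨c, d⟩ h
  simp only [Prod.mk.injEq, List.cons.injEq] at h
  simp [h.1.2, h.2]

lemma ix_injC (m : ℕ) : Function.Injective (fun p : List ℕ × List ℕ => (p.1, m :: p.2)) := by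
  rintro ⟨a, b⟩ ⟨c, d⟩ h
  simp only [Prod.mk.injEq, List.cons.injEq] at h
  simp [h.1, h.2.2]

lemma ix_injAC (n m : ℕ) :
    Function.Injective (fun p : List ℕ × List ℕ => (n :: p.1, m :: p.2)) := by
  rintro ⟨a, b⟩ ⟨c, d⟩ h
  simp only [Prod.mk.injEq, List.cons.injEq] at h
  simp [h.1.2, h.2.2]

lemma ixGMF_card (n : ℕ) : ∀ s, (ixGMF n s).card = ixF n s := by
  induction n with
  | zero =>
    intro s
    rw [ixF_full (Nat.zero_le s)]
    simp [ixGMF]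
  | succ n ih =>
    intro s
    cases s with
    | zero =>
      rw [ixGMF]
      have hdisj : Disjoint (ixGMF n 0)
          ((ixGMF n 1).image (fun p => (n :: p.1, p.2))) := by
        rw [Finset.disjoint_left]
        intro p hp hp'
        obtain ⟨q, hq, heq⟩ := Finset.mem_image.1 hp'
        have := ixGMF_boundA hp n (by rw [← heq]; simp)
        omega
      rw [Finset.card_union_of_disjoint hdisj,
        Finset.card_image_of_injective _ (ix_injA n), ih 0, ih 1,
        ixF_succ_zero]
      omega
    | succ s' =>
      rw [ixGMF]
      have hA : ∀ p ∈ ixGMF n (s'+1), ∀ a ∈ p.1, a < n := fun p hp => ixGMF_boundA hp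
      -- disjointness of the four pieces
      have d1 : Disjoint (ixGMF n (s'+1))
          ((ixGMF n (s'+2)).image (fun p => (n :: p.1, p.2))) := by
        rw [Finset.disjoint_left]
        intro p hp hp'
        obtain ⟨q, hq, heq⟩ := Finset.mem_image.1 hp'
        have := ixGMF_boundA hp n (by rw [← heq]; simp)
        omega
      have d2 : Disjoint ((ixGMF n (s'+1)) ∪ (ixGMF n (s'+2)).image (fun p => (n :: p.1, p.2)))
          ((ixGMF n s').image (fun p => (p.1, (n+1) :: p.2))) := by
        rw [Finset.disjoint_left]
        intro p hp hp'
        obtain ⟨q, hq, heq⟩ := Finset.mem_image.1 hp'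
        rcases Finset.mem_union.1 hp with h | h
        · have := ixGMF_boundC h (n+1) (by rw [← heq]; simp)
          omega
        · obtain ⟨r, hr, heq2⟩ := Finset.mem_image.1 h
          rw [← heq2] at heq
          simp only [Prod.mk.injEq] at heq
          have : n ∈ q.1 := by rw [heq.1]; simp
          have := ixGMF_boundA hq n this
          omega
      have d3 : Disjoint (((ixGMF n (s'+1)) ∪ (ixGMF n (s'+2)).image (fun p => (n :: p.1, p.2)))
            ∪ (ixGMF n s').image (fun p => (p.1, (n+1) :: p.2)))
          ((ixGMF n (s'+1)).image (fun p => (n :: p.1, (n+1) :: p.2))) := by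
        rw [Finset.disjoint_left]
        intro p hp hp'
        obtain ⟨q, hq, heq⟩ := Finset.mem_image.1 hp'
        rcases Finset.mem_union.1 hp with h | h
        · rcases Finset.mem_union.1 h with h2 | h2
          · have := ixGMF_boundC h2 (n+1) (by rw [← heq]; simp)
            omega
          · obtain ⟨r, hr, heq2⟩ := Finset.mem_image.1 h2
            rw [← heq2] at heq
            simp only [Prod.mk.injEq] at heq
            have : (n+1) ∈ r.2 := by rw [← heq.2]; simp
            have := ixGMF_boundC hr (n+1) this
            omega
        · obtain ⟨r, hr, heq2⟩ := Finset.mem_image.1 h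
          rw [← heq2] at heq
          simp only [Prod.mk.injEq] at heq
          have : n ∈ r.1 := by rw [← heq.1]; simp
          have := ixGMF_boundA hr n this
          omega
      rw [Finset.card_union_of_disjoint d3, Finset.card_union_of_disjoint d2,
        Finset.card_union_of_disjoint d1,
        Finset.card_image_of_injective _ (ix_injA n),
        Finset.card_image_of_injective _ (ix_injC (n+1)),
        Finset.card_image_of_injective _ (ix_injAC n (n+1)),
        ih s', ih (s'+1), ih (s'+2), ixF_succ_succ]
      omega

def ixT : ℕ → ℕ → Prop := fun b b' => b ≤ b' ∧ (b = b' → b = 0)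

lemma ix_len_le : ∀ (n : ℕ) (as : List ℕ), as.Pairwise (· > ·) →
    (∀ a ∈ as, a < n) → as.length ≤ n := by
  intro n as
  induction as generalizing n with
  | nil => simp
  | cons a as' ih =>
    intro hp hb
    have ha : a < n := hb a (by simp)
    have hp' := List.pairwise_cons.1 hp
    have : as'.length ≤ a := ih a hp'.2 (fun x hx => hp'.1 x hx)
    simp only [List.length_cons]
    omega

lemma ixRel_zero_iff : ∀ (cs as : List ℕ),
    ixRel 0 cs as ↔ List.Forall₂ (· ≤ ·) cs (as.take cs.length) := by
  intro cs
  induction cs with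
  | nil => intro as; simp [ixRel]
  | cons c cs' ih =>
    intro as
    cases as with
    | nil =>
      simp only [ixRel, List.take_nil]
      constructor
      · exact fun h => h.elim
      · intro h; cases h
    | cons a as' =>
      simp only [ixRel, List.length_cons, List.take_succ_cons]
      rw [List.forall₂_cons, ih as']

lemma ix_forall₂_replicate : ∀ (u : List ℕ),
    List.Forall₂ (fun a b => b ≤ a) u (List.replicate u.length 0) := by
  intro u
  induction u with
  | nil => simp
  | cons a u' ih =>
    simp only [List.length_cons, List.replicate_succ]
    exact List.Forall₂.cons (Nat.zero_le a) ih

lemma ix_pairwise_zip {S T : ℕ → ℕ → Prop} : ∀ (u v : List ℕ),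
    u.Pairwise S → v.Pairwise T →
    (u.zip v).Pairwise (fun p q => S p.1 q.1 ∧ T p.2 q.2) := by
  intro u
  induction u with
  | nil => intro v _ _; simp
  | cons a u' ih =>
    intro v hu hv
    cases v with
    | nil => simp
    | cons b v' =>
      simp only [List.zip_cons_cons]
      refine List.pairwise_cons.2 ⟨?_, ih v' (List.pairwise_cons.1 hu).2
        (List.pairwise_cons.1 hv).2⟩
      rintro ⟨x, y⟩ hxy
      have hm := List.of_mem_zip hxy
      exact ⟨(List.pairwise_cons.1 hu).1 x hm.1, (List.pairwise_cons.1 hv).1 y hm.2⟩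

lemma ix_snd_decomp : ∀ (bs : List ℕ), bs.Pairwise ixT →
    bs = List.replicate (bs.length - (bs.filter (fun b => decide (0 < b))).length) 0
      ++ bs.filter (fun b => decide (0 < b)) := by
  intro bs
  induction bs with
  | nil => simp
  | cons b bs' ih =>
    intro hp
    have hp' := List.pairwise_cons.1 hp
    by_cases hb : b = 0
    · subst hb
      have hf : List.filter (fun b => decide (0 < b)) (0 :: bs')
          = List.filter (fun b => decide (0 < b)) bs' := by simp
      rw [hf]
      have hlen : (List.filter (fun b => decide (0 < b)) bs').length ≤ bs'.length :=
        List.length_filter_le _ _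
      rw [show (0 :: bs').length - (List.filter (fun b => decide (0 < b)) bs').length
          = ((bs').length - (List.filter (fun b => decide (0 < b)) bs').length) + 1 by
        simp only [List.length_cons]; omega]
      rw [List.replicate_succ, List.cons_append]
      exact congrArg _ (ih hp'.2)
    · -- b positive: all of bs' positive and filter = self
      have hball : ∀ x ∈ bs', 0 < x := by
        intro x hx
        have := hp'.1 x hx
        rcases this with ⟨h1, h2⟩
        rcases Nat.lt_or_ge 0 x with h | h
        · exact h
        · exfalso; have : x = 0 := by omega
          subst this
          have : b = 0 := by omega
          exact hb this
      have hf : List.filter (fun b => decide (0 < b)) (b :: bs') = b :: bs' := by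
        rw [List.filter_eq_self]
        intro x hx
        rcases List.mem_cons.1 hx with rfl | hx'
        · simp; omega
        · simp [hball x hx']
      rw [hf]
      simp

def ixG (p : List ℕ × List ℕ) : List (ℕ × ℕ) :=
  p.1.reverse.zip (List.replicate (p.1.length - p.2.length) 0 ++ p.2.reverse)

def ixFwd (l : List (ℕ × ℕ)) : List ℕ × List ℕ :=
  ((l.map Prod.fst).reverse, ((l.map Prod.snd).filter (fun b => decide (0 < b))).reverse)

-- main transfer lemma 1
lemma ixG_isMatrix {n : ℕ} {p : List ℕ × List ℕ} (h : ixPred n 0 p)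
    (hne : p ≠ ([], [])) : IsIndexingMatrix n (ixG p) := by
  obtain ⟨as, cs⟩ := p
  obtain ⟨h1, h2, h3, h4, h5⟩ := h
  simp only at h1 h2 h3 h4 h5
  have hlen : cs.length ≤ as.length := by have := ixRel_len h5; omega
  have hbslen : (List.replicate (as.length - cs.length) 0 ++ cs.reverse).length
      = as.length := by
    simp; omega
  have hane : as ≠ [] := by
    intro hanil
    apply hne
    have : cs = [] := List.eq_nil_of_length_eq_zero (by
      rw [hanil] at hlen; simpa using hlen)
    rw [hanil, this]
  have hglen : (ixG (as, cs)).length = as.length := by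
    simp only [ixG, List.length_zip]
    simp only [List.length_reverse]
    simp [hbslen]
  -- the Forall₂ fact
  have hsplit : as.reverse
      = (as.drop cs.length).reverse ++ (as.take cs.length).reverse := by
    rw [← List.reverse_append, List.take_append_drop]
  have piece1 : List.Forall₂ (fun a b => b ≤ a) (as.drop cs.length).reverse
      (List.replicate (as.length - cs.length) 0) := by
    have := ix_forall₂_replicate (as.drop cs.length).reverse
    rwa [show (as.drop cs.length).reverse.length = as.length - cs.length by simp] at this
  have piece2 : List.Forall₂ (fun a b => b ≤ a) (as.take cs.length).reverse cs.reverse := by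
    rw [List.forall₂_reverse_iff]
    exact ((ixRel_zero_iff cs as).1 h5).flip
  have HF : List.Forall₂ (fun a b => b ≤ a) as.reverse
      (List.replicate (as.length - cs.length) 0 ++ cs.reverse) := by
    rw [hsplit]
    exact List.rel_append piece1 piece2
  have HFzip : ∀ {a b : ℕ}, (a, b) ∈ as.reverse.zip
      (List.replicate (as.length - cs.length) 0 ++ cs.reverse) → b ≤ a :=
    (List.forall₂_iff_zip.1 HF).2
  -- pairwise facts
  have PS : as.reverse.Pairwise (· < ·) := List.pairwise_reverse.2 h1
  have PTcs : cs.reverse.Pairwise ixT := by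
    refine (List.pairwise_reverse.2 h3).imp ?_
    intro a b hab
    exact ⟨le_of_lt hab, fun h => absurd h (by omega)⟩
  have PT : (List.replicate (as.length - cs.length) 0 ++ cs.reverse).Pairwise ixT := by
    rw [List.pairwise_append]
    refine ⟨List.pairwise_replicate.2 (Or.inr ⟨le_refl 0, fun _ => rfl⟩), PTcs, ?_⟩
    intro x hx c hc
    have hx0 : x = 0 := List.eq_of_mem_replicate hx
    subst hx0
    exact ⟨Nat.zero_le c, fun _ => rfl⟩
  refine ⟨?_, ?_, ?_, ?_⟩
  · rw [hglen]
    have := List.length_pos_iff.2 hane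
    omega
  · rw [hglen]; exact ix_len_le n as h1 h2
  · rintro ⟨x, y⟩ hxy
    have hm := List.of_mem_zip hxy
    constructor
    · exact h2 x (List.mem_reverse.1 hm.1)
    · exact HFzip hxy
  · have := ix_pairwise_zip as.reverse _ PS PT
    refine this.imp ?_
    rintro p q ⟨hS, hT⟩
    exact ⟨hS, hT.1, hT.2⟩

-- main transfer lemma 2 : left inverse
lemma ixFwd_ixG {p : List ℕ × List ℕ} (hlen : p.2.length ≤ p.1.length)
    (hpos : ∀ c ∈ p.2, 1 ≤ c) : ixFwd (ixG p) = p := by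
  obtain ⟨as, cs⟩ := p
  simp only at hlen hpos
  set z := as.length - cs.length with hz
  have hbslen : (List.replicate z 0 ++ cs.reverse).length = as.reverse.length := by
    simp [hz]; omega
  have hmapfst : (ixG (as, cs)).map Prod.fst = as.reverse := by
    apply List.map_fst_zip
    simp; omega
  have hmapsnd : (ixG (as, cs)).map Prod.snd = List.replicate z 0 ++ cs.reverse := by
    apply List.map_snd_zip
    simp [hz]; omega
  have hfilter : (List.replicate z 0 ++ cs.reverse).filter (fun b => decide (0 < b))
      = cs.reverse := by
    rw [List.filter_append]
    rw [List.filter_eq_nil_iff.2 (fun a ha => by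
      have : a = 0 := List.eq_of_mem_replicate ha
      simp [this])]
    rw [List.filter_eq_self.2 (fun a ha => by
      have := hpos a (List.mem_reverse.1 ha)
      simp; omega)]
    simp
  simp only [ixFwd, hmapfst, hmapsnd, hfilter, List.reverse_reverse]

lemma ix_forall₂_of_mem : ∀ (l : List (ℕ × ℕ)), (∀ p ∈ l, p.2 ≤ p.1) →
    List.Forall₂ (· ≤ ·) (l.map Prod.snd) (l.map Prod.fst) := by
  intro l
  induction l with
  | nil => simp
  | cons p l' ih =>
    intro h
    simp only [List.map_cons]
    exact List.Forall₂.cons (h p (by simp)) (ih (fun q hq => h q (by simp [hq])))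

lemma ixFwd_matrix {n : ℕ} {l : List (ℕ × ℕ)} (h : IsIndexingMatrix n l) :
    ixPred n 0 (ixFwd l) ∧ ixFwd l ≠ ([], []) ∧ ixG (ixFwd l) = l := by
  obtain ⟨hm1, hm2, hm3, hm4⟩ := h
  set as' := l.map Prod.fst with has'
  set bs' := l.map Prod.snd with hbs'
  set ps := bs'.filter (fun b => decide (0 < b)) with hps
  have hlenab : as'.length = bs'.length := by simp [has', hbs']
  have hlenal : as'.length = l.length := by simp [has']
  have hpslen : ps.length ≤ bs'.length := List.length_filter_le _ _
  have hpw_as : as'.Pairwise (· < ·) :=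
    hm4.map Prod.fst (fun a b hab => hab.1)
  have hpw_bs : bs'.Pairwise ixT :=
    hm4.map Prod.snd (fun a b hab => ⟨hab.2.1, hab.2.2⟩)
  have hdecomp : bs' = List.replicate (bs'.length - ps.length) 0 ++ ps :=
    ix_snd_decomp bs' hpw_bs
  have hpos : ∀ c ∈ ps, 0 < c := by
    intro c hc
    have := (List.mem_filter.1 hc).2
    simpa using this
  have hpw_ps : ps.Pairwise (· < ·) := by
    have hsub : ps.Pairwise ixT :=
      List.Pairwise.sublist (List.filter_sublist (l := bs')) hpw_bs
    refine hsub.imp_of_mem ?_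
    intro a b ha hb ⟨hle, heq⟩
    rcases Nat.lt_or_ge a b with h | h
    · exact h
    · exfalso
      have : a = b := by omega
      have := heq this
      have := hpos a ha
      omega
  -- Forall₂ chain
  have F0 : List.Forall₂ (· ≤ ·) bs' as' := by
    apply ix_forall₂_of_mem
    intro p hp; exact (hm3 p hp).2
  have F1 : List.Forall₂ (· ≤ ·) (List.replicate (bs'.length - ps.length) 0 ++ ps) as' := by
    rw [← hdecomp]; exact F0
  have F1' : List.Forall₂ (· ≥ ·) as' (List.replicate (bs'.length - ps.length) 0 ++ ps) :=
    List.Forall₂.flip F1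
  have F2 : List.Forall₂ (· ≥ ·) (as'.drop (List.replicate (bs'.length - ps.length) (0:ℕ)).length) ps :=
    List.forall₂_drop_append _ _ _ F1'
  have F3 : List.Forall₂ (· ≤ ·) ps (as'.drop (bs'.length - ps.length)) := by
    apply List.Forall₂.flip
    rw [List.length_replicate] at F2
    exact F2
  -- Rel
  have hrel : ixRel 0 ps.reverse as'.reverse := by
    rw [ixRel_zero_iff]
    have ht : ps.reverse.length = ps.length := by simp
    rw [ht, List.take_reverse, List.forall₂_reverse_iff, hlenab]
    exact F3
  refine ⟨⟨?_, ?_, ?_, ?_, ?_⟩, ?_, ?_⟩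
  · -- as pairwise >
    show (as'.reverse).Pairwise (· > ·)
    exact List.pairwise_reverse.2 hpw_as
  · show ∀ a ∈ as'.reverse, a < n
    intro a ha
    obtain ⟨p, hp, rfl⟩ := List.mem_map.1 (List.mem_reverse.1 ha)
    exact (hm3 p hp).1
  · show (ps.reverse).Pairwise (· > ·)
    exact List.pairwise_reverse.2 hpw_ps
  · show ∀ c ∈ ps.reverse, 1 ≤ c ∧ c ≤ n
    intro c hc
    have hc' := List.mem_reverse.1 hc
    refine ⟨hpos c hc', ?_⟩
    have hcm : c ∈ bs' := List.mem_of_mem_filter hc'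
    obtain ⟨p, hp, rfl⟩ := List.mem_map.1 hcm
    have := hm3 p hp
    omega
  · exact hrel
  · -- nonempty
    intro hbad
    have : as'.reverse = [] := congrArg Prod.fst hbad
    have : as'.length = 0 := by
      have := congrArg List.length this
      simpa using this
    omega
  · -- ixG ∘ ixFwd = id
    show (as'.reverse.reverse).zip
      (List.replicate (as'.reverse.length - ps.reverse.length) 0 ++ ps.reverse.reverse) = l
    rw [List.reverse_reverse, List.reverse_reverse]
    have hzz : as'.reverse.length - ps.reverse.length = bs'.length - ps.length := by
      simp [hlenab]
    rw [hzz, ← hdecomp]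
    have hunzip := List.unzip_eq_map (l := l)
    have := List.zip_unzip l
    rw [hunzip] at this
    exact this


/-- the number of indexing matrices on `n` points, together with
the degenerate one, is the central binomial coefficient `C(2n, n)`. -/
theorem stmt0 (n : ℕ) (hn : 1 ≤ n) :
    Nat.card {l : List (ℕ × ℕ) // IsIndexingMatrix n l} + 1 =
      (2 * n).choose n := by
  classical
  set S : Set (List ℕ × List ℕ) := (↑(ixGMF n 0) : Set _) \ {([], [])} with hS
  set M : Set (List (ℕ × ℕ)) := {l | IsIndexingMatrix n l} with hM
  have hSpred : ∀ p ∈ S, ixPred n 0 p ∧ p ≠ ([], []) := by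
    intro p hp
    obtain ⟨hp1, hp2⟩ := hp
    exact ⟨(ixGMF_mem n 0 p).1 hp1, fun h => hp2 (by simp [h])⟩
  have hbij : Set.BijOn ixG S M := by
    refine ⟨?_, ?_, ?_⟩
    · intro p hp
      obtain ⟨hp1, hp2⟩ := hSpred p hp
      exact ixG_isMatrix hp1 hp2
    · intro p hp q hq heq
      obtain ⟨hp1, _⟩ := hSpred p hp
      obtain ⟨hq1, _⟩ := hSpred q hq
      have hp2 : p.2.length ≤ p.1.length := by
        have := ixRel_len hp1.2.2.2.2; omega
      have hq2 : q.2.length ≤ q.1.length := by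
        have := ixRel_len hq1.2.2.2.2; omega
      have e1 := ixFwd_ixG hp2 (fun c hc => (hp1.2.2.2.1 c hc).1)
      have e2 := ixFwd_ixG hq2 (fun c hc => (hq1.2.2.2.1 c hc).1)
      rw [← e1, ← e2, heq]
    · intro l hl
      obtain ⟨hpred, hne, hgf⟩ := ixFwd_matrix hl
      refine ⟨ixFwd l, ⟨?_, ?_⟩, hgf⟩
      · exact (ixGMF_mem n 0 _).2 hpred
      · simpa using hne
  have hmem : ([], ([] : List ℕ)) ∈ ixGMF n 0 :=
    (ixGMF_mem n 0 _).2 ⟨by simp, by simp, by simp, by simp, by simp⟩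
  have hcard1 : Nat.card {l : List (ℕ × ℕ) // IsIndexingMatrix n l} = M.ncard := by
    rw [hM]
    exact Nat.card_coe_set_eq _
  have hcard2 : M.ncard = S.ncard := by
    rw [← hbij.image_eq]
    exact Set.ncard_image_of_injOn hbij.injOn
  have hcard3 : S.ncard = (ixGMF n 0).card - 1 := by
    rw [hS, ← Finset.coe_erase, Set.ncard_coe_finset,
      Finset.card_erase_of_mem hmem]
  have hpos : 1 ≤ (ixGMF n 0).card := Finset.card_pos.2 ⟨_, hmem⟩
  have hfin : (ixGMF n 0).card = (2*n).choose n := by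
    rw [ixGMF_card n 0, ixF_zero]
  omega
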